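/- Let A be a finite set of positive integers, let g(n) ≥ 0 for all n ∈ A, let H be a positive integer, and let (α_n)_{n ∈ A} be real numbers. If ∑_{h=1}^{H} |∑_{n ∈ A} g(n) e(h α_n)| < (1/6) ∑_{n ∈ A} g(n), then there exists n ∈ A with ‖α_n‖ < 1/H. -/

import Mathlib

open Finset

/-- `e x = exp(2 π i x)`. -/
noncomputable def e (x : ℝ) : ℂ := Complex.exp (2 * Real.pi * Complex.I * x)

/-- `‖x‖`, the distance from the real number `x` to the nearest integer. -/
noncomputable def nint (x : ℝ) : ℝ := |x - (round x : ℝ)|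

private lemma e_add (x y : ℝ) : e (x + y) = e x * e y := by
  unfold e; rw [← Complex.exp_add]; congr 1; push_cast; ring

private lemma e_zero : e 0 = 1 := by
  unfold e; norm_num

private lemma e_conj (x : ℝ) : (starRingEnd ℂ) (e x) = e (-x) := by
  unfold e
  rw [← Complex.exp_conj]
  congr 1
  have : ((2:ℂ) * Real.pi * Complex.I * x) = ((2*Real.pi*x : ℝ):ℂ) * Complex.I := by push_cast; ring
  rw [this, map_mul, Complex.conj_I, Complex.conj_ofReal]
  push_cast; ring

private lemma e_re (x : ℝ) : (e x).re = Real.cos (2 * Real.pi * x) := by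
  unfold e
  rw [show (2 * (Real.pi:ℝ) * Complex.I * (x:ℝ) : ℂ) = ((2*Real.pi*x : ℝ) : ℂ) * Complex.I by push_cast; ring]
  exact Complex.exp_ofReal_mul_I_re _

-- tent weight
private def wi (M x : ℤ) : ℤ := max (min (x+1) (2*M-1-x)) 0
private noncomputable def wr (M x : ℤ) : ℝ := ((wi M x : ℤ) : ℝ)
private noncomputable def SS (M : ℤ) : Finset ℤ := Finset.Icc 0 (2*M-2)
private noncomputable def NF (M j : ℤ) : ℝ := ∑ s ∈ SS M, wr M s * wr M (s - j)
private noncomputable def CF (M : ℤ) (c : ℝ) (j : ℤ) : ℝ := NF M (j-1) + NF M (j+1) - 2*c*NF M j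
private noncomputable def Om (M : ℤ) : Finset ℤ := Finset.Icc (-(3*M)) (3*M)
private noncomputable def Wc (M : ℤ) (θ : ℝ) : ℂ := ∑ s ∈ SS M, ((wr M s : ℝ) : ℂ) * e ((s : ℝ) * θ)

private lemma wr_nonneg (M x : ℤ) : 0 ≤ wr M x := by
  unfold wr; exact_mod_cast (by unfold wi; omega : (0:ℤ) ≤ wi M x)

private lemma wr_le (M x : ℤ) (hM : 1 ≤ M) : wr M x ≤ (M : ℝ) := by
  unfold wr; exact_mod_cast (by unfold wi; omega : wi M x ≤ M)

private lemma wr_eq_zero (M x : ℤ) (h : x < 0 ∨ 2*M-2 < x) : wr M x = 0 := by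
  unfold wr; exact_mod_cast (by unfold wi; omega : wi M x = 0)

private lemma wr_mid (M : ℤ) (hM : 1 ≤ M) : wr M (M-1) = (M:ℝ) := by
  unfold wr; exact_mod_cast (by unfold wi; omega : wi M (M-1) = M)

-- sum utilities
private lemma sum_shrink {β : Type} [AddCommMonoid β] (f : ℤ → β) {a b lo hi : ℤ}
    (h1 : lo ≤ a) (h2 : b ≤ hi) (hv : ∀ x, x < a ∨ b < x → f x = 0) :
    ∑ x ∈ Finset.Icc lo hi, f x = ∑ x ∈ Finset.Icc a b, f x := by
  refine (Finset.sum_subset (Finset.Icc_subset_Icc h1 h2) ?_).symm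
  intro x hx hx'
  simp only [Finset.mem_Icc] at hx hx'
  exact hv x (by omega)

private lemma sum_transl {β : Type} [AddCommMonoid β] (f : ℤ → β) (a b t : ℤ) :
    ∑ x ∈ Finset.Icc a b, f (x + t) = ∑ x ∈ Finset.Icc (a+t) (b+t), f x := by
  rw [← Finset.map_add_right_Icc a b t, Finset.sum_map]
  rfl

private lemma sum_sub_reindex {β : Type} [AddCommMonoid β] (f : ℤ → β) (s a b : ℤ) :
    ∑ x ∈ Finset.Icc a b, f (s - x) = ∑ x ∈ Finset.Icc (s-b) (s-a), f x := by
  refine Finset.sum_nbij' (fun x => s - x) (fun x => s - x) ?_ ?_ ?_ ?_ ?_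
  · intro x hx; simp only [Finset.mem_Icc] at *; omega
  · intro x hx; simp only [Finset.mem_Icc] at *; omega
  · intro x _; omega
  · intro x _; omega
  · intro x _; rfl

-- pointwise shift of tent
private lemma wr_shift (n x : ℤ) (hn : 1 ≤ n) (h0 : 0 ≤ x) (h1 : x ≤ 2*n) :
    wr (n+1) x = wr n (x-1) + 1 := by
  unfold wr
  have : wi (n+1) x = wi n (x-1) + 1 := by unfold wi; omega
  rw [this]; push_cast; ring

private lemma card_Icc_real (n : ℤ) (hn : 0 ≤ n) : ∑ _x ∈ Finset.Icc (0:ℤ) n, (1:ℝ) = (n:ℝ)+1 := by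
  rw [Finset.sum_const, Int.card_Icc, nsmul_eq_mul]
  have hc : ((n + 1 - 0).toNat : ℝ) = (n:ℝ)+1 := by
    rw [show ((n + 1 - 0).toNat : ℝ) = (((n + 1 - 0).toNat : ℤ) : ℝ) by push_cast; ring,
      Int.toNat_of_nonneg (by omega)]
    push_cast; ring
  rw [hc]; ring

private lemma sumW : ∀ (M : ℤ), 1 ≤ M → ∑ s ∈ SS M, wr M s = (M:ℝ)^2 := by
  refine Int.le_induction ?_ ?_
  · show ∑ s ∈ SS 1, wr 1 s = ((1:ℤ):ℝ)^2
    have : SS 1 = {0} := by unfold SS; decide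
    rw [this]
    simp [wr, wi]
  · intro n hn ih
    have hSS : SS (n+1) = Finset.Icc 0 (2*n) := by unfold SS; congr 1; ring
    rw [hSS]
    have hpt : ∀ x ∈ Finset.Icc (0:ℤ) (2*n), wr (n+1) x = wr n (x-1) + 1 := by
      intro x hx; simp only [Finset.mem_Icc] at hx; exact wr_shift n x hn hx.1 hx.2
    rw [Finset.sum_congr rfl hpt, Finset.sum_add_distrib]
    have h1 : ∑ x ∈ Finset.Icc (0:ℤ) (2*n), wr n (x-1) = (n:ℝ)^2 := by
      have := sum_transl (wr n) 0 (2*n) (-1)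
      simp only [show ∀ x:ℤ, x + (-1) = x - 1 from fun x => by ring] at this
      rw [this]
      rw [sum_shrink (wr n) (by omega : (0:ℤ) - 1 ≤ 0) (by omega : 2*n-2 ≤ 2*n - 1)
        (fun x hx => wr_eq_zero n x hx)]
      exact ih
    rw [h1, card_Icc_real (2*n) (by omega)]; push_cast; ring

private lemma sumWsq : ∀ (M : ℤ), 1 ≤ M →
    ∑ s ∈ SS M, (wr M s)^2 = ((M:ℝ)*(2*(M:ℝ)^2+1))/3 := by
  refine Int.le_induction ?_ ?_
  · show ∑ s ∈ SS 1, (wr 1 s)^2 = _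
    have : SS 1 = {0} := by unfold SS; decide
    rw [this]
    simp [wr, wi]
    norm_num
  · intro n hn ih
    have hSS : SS (n+1) = Finset.Icc 0 (2*n) := by unfold SS; congr 1; ring
    rw [hSS]
    have hpt : ∀ x ∈ Finset.Icc (0:ℤ) (2*n), (wr (n+1) x)^2 = (wr n (x-1))^2 + (2*wr n (x-1) + 1) := by
      intro x hx; simp only [Finset.mem_Icc] at hx
      rw [wr_shift n x hn hx.1 hx.2]; ring
    rw [Finset.sum_congr rfl hpt]
    rw [Finset.sum_add_distrib, Finset.sum_add_distrib]
    have h1 : ∑ x ∈ Finset.Icc (0:ℤ) (2*n), (wr n (x-1))^2 = ((n:ℝ)*(2*(n:ℝ)^2+1))/3 := by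
      have := sum_transl (fun y => (wr n y)^2) 0 (2*n) (-1)
      simp only [show ∀ x:ℤ, x + (-1) = x - 1 from fun x => by ring] at this
      rw [this]
      rw [sum_shrink (fun y => (wr n y)^2) (by omega : (0:ℤ) - 1 ≤ 0) (by omega : 2*n-2 ≤ 2*n - 1)
        (fun x hx => by show (wr n x)^2 = 0; rw [wr_eq_zero n x hx]; norm_num)]
      exact ih
    have h1b : ∑ x ∈ Finset.Icc (0:ℤ) (2*n), 2*wr n (x-1) = 2*(n:ℝ)^2 := by
      rw [← Finset.mul_sum]
      have := sum_transl (wr n) 0 (2*n) (-1)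
      simp only [show ∀ x:ℤ, x + (-1) = x - 1 from fun x => by ring] at this
      rw [this]
      rw [sum_shrink (wr n) (by omega : (0:ℤ) - 1 ≤ 0) (by omega : 2*n-2 ≤ 2*n - 1)
        (fun x hx => wr_eq_zero n x hx)]
      have hW := sumW n hn
      unfold SS at hW
      rw [hW]
    rw [h1, h1b, card_Icc_real (2*n) (by omega)]; push_cast; ring

private lemma NF_zero_eq (M : ℤ) (hM : 1 ≤ M) : NF M 0 = ((M:ℝ)*(2*(M:ℝ)^2+1))/3 := by
  unfold NF
  rw [Finset.sum_congr rfl (fun s _ => by rw [show s - (0:ℤ) = s by ring, ← sq])]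
  exact sumWsq M hM

private lemma NF_nonneg (M j : ℤ) : 0 ≤ NF M j := by
  apply Finset.sum_nonneg
  intro s _
  exact mul_nonneg (wr_nonneg M s) (wr_nonneg M (s-j))

private lemma NF_eq_zero (M j : ℤ) (h : 2*M-2 < j ∨ j < -(2*M-2)) : NF M j = 0 := by
  apply Finset.sum_eq_zero
  intro s hs
  simp only [SS, Finset.mem_Icc] at hs
  rw [wr_eq_zero M (s-j) (by omega)]
  ring

private lemma NF_le_NF0 (M j : ℤ) (hM : 1 ≤ M) (hj1 : -(3*M) ≤ j) (hj2 : j ≤ 3*M) :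
    NF M j ≤ NF M 0 := by
  have h0 : NF M 0 = ∑ s ∈ SS M, (wr M s)^2 := by
    unfold NF
    exact Finset.sum_congr rfl (fun s _ => by rw [show s-(0:ℤ) = s by ring, ← sq])
  have key : ∑ s ∈ SS M, (wr M (s-j))^2 ≤ ∑ s ∈ SS M, (wr M s)^2 := by
    rw [show SS M = Finset.Icc 0 (2*M-2) from rfl]
    have t1 := sum_transl (fun y => (wr M y)^2) 0 (2*M-2) (-j)
    simp only [show ∀ x:ℤ, x + (-j) = x - j from fun x => by ring] at t1
    rw [t1]
    calc ∑ x ∈ Finset.Icc (0-j) (2*M-2-j), (wr M x)^2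
        ≤ ∑ x ∈ Finset.Icc (-(4*M)) (5*M), (wr M x)^2 :=
          Finset.sum_le_sum_of_subset_of_nonneg
            (Finset.Icc_subset_Icc (by omega) (by omega)) (fun i _ _ => sq_nonneg _)
      _ = ∑ x ∈ Finset.Icc 0 (2*M-2), (wr M x)^2 :=
          sum_shrink _ (by omega) (by omega)
            (fun x hx => by show (wr M x)^2 = 0; rw [wr_eq_zero M x hx]; norm_num)
  have hterm : ∀ s ∈ SS M, wr M s * wr M (s-j) ≤ ((wr M s)^2 + (wr M (s-j))^2)/2 :=
    fun s _ => by nlinarith [sq_nonneg (wr M s - wr M (s-j))]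
  have hsumle := Finset.sum_le_sum hterm
  rw [← Finset.sum_div, Finset.sum_add_distrib] at hsumle
  unfold NF
  calc ∑ s ∈ SS M, wr M s * wr M (s-j)
      ≤ (∑ s ∈ SS M, (wr M s)^2 + ∑ s ∈ SS M, (wr M (s-j))^2)/2 := hsumle
    _ ≤ ∑ s ∈ SS M, (wr M s)^2 := by linarith
    _ = ∑ s ∈ SS M, wr M s * wr M (s - 0) :=
        Finset.sum_congr rfl (fun s _ => by rw [show s-(0:ℤ) = s by ring]; ring)

private lemma wr_dd (M : ℤ) (hM : 1 ≤ M) (x : ℤ) :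
    wr M (x+1) + wr M (x-1) - 2*wr M x
      = (if x = -1 then (1:ℝ) else 0) + (if x = 2*M-1 then 1 else 0)
        - 2*(if x = M-1 then 1 else 0) := by
  have hz : wi M (x+1) + wi M (x-1) - 2*wi M x
      = (if x = -1 then (1:ℤ) else 0) + (if x = 2*M-1 then 1 else 0)
        - 2*(if x = M-1 then 1 else 0) := by
    unfold wi; split_ifs <;> omega
  have : wr M (x+1) + wr M (x-1) - 2*wr M x
      = ((wi M (x+1) + wi M (x-1) - 2*wi M x : ℤ) : ℝ) := by
    unfold wr; push_cast; ring
  rw [this, hz]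
  push_cast
  split_ifs <;> norm_num

private lemma NF_second_diff (M : ℤ) (hM : 1 ≤ M) (j : ℤ) :
    NF M (j-1) + NF M (j+1) - 2*NF M j
      = wr M (j-1) + wr M (j+2*M-1) - 2*wr M (j+M-1) := by
  unfold NF
  have hcomb : ∀ s ∈ SS M,
      wr M s * wr M (s-(j-1)) + wr M s * wr M (s-(j+1)) - 2*(wr M s * wr M (s-j))
        = wr M s * (if s-j = -1 then (1:ℝ) else 0)
          + wr M s * (if s-j = 2*M-1 then 1 else 0)
          - 2*(wr M s * (if s-j = M-1 then 1 else 0)) := by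
    intro s _
    have e1 : s-(j-1) = (s-j)+1 := by ring
    have e2 : s-(j+1) = (s-j)-1 := by ring
    rw [e1, e2]
    have hd := wr_dd M hM (s-j)
    linear_combination wr M s * hd
  have expand : ∀ (u : ℤ → ℝ),
      (∑ s ∈ SS M, wr M s * u s + ∑ s ∈ SS M, wr M s * u s) = 2*∑ s ∈ SS M, wr M s * u s := by
    intro u; ring
  have key : ∑ s ∈ SS M, wr M s * wr M (s-(j-1)) + ∑ s ∈ SS M, wr M s * wr M (s-(j+1))
      - 2*∑ s ∈ SS M, wr M s * wr M (s-j)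
      = ∑ s ∈ SS M, wr M s * (if s-j = -1 then (1:ℝ) else 0)
        + ∑ s ∈ SS M, wr M s * (if s-j = 2*M-1 then (1:ℝ) else 0)
        - 2*∑ s ∈ SS M, wr M s * (if s-j = M-1 then (1:ℝ) else 0) := by
    rw [← Finset.sum_add_distrib, ← Finset.sum_add_distrib, Finset.mul_sum, Finset.mul_sum,
      ← Finset.sum_sub_distrib, ← Finset.sum_sub_distrib]
    exact Finset.sum_congr rfl (fun s hs => by have := hcomb s hs; linarith)
  have pick : ∀ (v : ℤ), ∑ s ∈ SS M, wr M s * (if s-j = v then (1:ℝ) else 0) = wr M (j+v) := by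
    intro v
    have : ∀ s, (if s-j = v then (1:ℝ) else 0) = if s = j+v then 1 else 0 := by
      intro s
      by_cases h : s = j+v
      · rw [if_pos h, if_pos (by omega)]
      · rw [if_neg h, if_neg (by omega)]
    rw [Finset.sum_congr rfl (fun s _ => by rw [this s, mul_ite, mul_one, mul_zero])]
    rw [Finset.sum_ite_eq' (SS M) (j+v) (wr M)]
    split_ifs with hmem
    · rfl
    · simp only [SS, Finset.mem_Icc] at hmem
      rw [wr_eq_zero M (j+v) (by omega)]
  rw [key, pick (-1), pick (2*M-1), pick (M-1)]
  rw [show j + -1 = j - 1 by ring, show j + (2*M-1) = j+2*M-1 by ring,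
    show j + (M-1) = j+M-1 by ring]

private lemma CF_zero_eq (M : ℤ) (c : ℝ) (hM : 1 ≤ M) :
    CF M c 0 = 2*(1-c)*NF M 0 - 2*(M:ℝ) := by
  have hsd := NF_second_diff M hM 0
  rw [show (0:ℤ)+M-1 = M-1 by ring, show (0:ℤ)+2*M-1 = 2*M-1 by ring] at hsd
  rw [wr_eq_zero M (0-1) (by omega), wr_eq_zero M (2*M-1) (by omega), wr_mid M hM] at hsd
  unfold CF
  rw [show (0:ℤ)-1 = -1 by ring] at *
  rw [show (0:ℤ)+1 = 1 by ring] at *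
  linarith

private lemma CF_bound (M : ℤ) (c : ℝ) (hM : 1 ≤ M) (hc : c ≤ 1)
    (hkey : (7/4)*(M:ℝ) ≤ (1-c)*NF M 0)
    (j : ℤ) (hj1 : -(3*M) ≤ j) (hj2 : j ≤ 3*M) (hj0 : j ≠ 0) :
    |CF M c j| ≤ 3 * CF M c 0 := by
  have hsd := NF_second_diff M hM j
  have hCFj : CF M c j = (wr M (j-1) + wr M (j+2*M-1) - 2*wr M (j+M-1)) + 2*(1-c)*NF M j := by
    unfold CF; linarith
  have hN0 : 0 ≤ NF M 0 := NF_nonneg M 0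
  have hNj0 : 0 ≤ NF M j := NF_nonneg M j
  have hNle : NF M j ≤ NF M 0 := NF_le_NF0 M j hM hj1 hj2
  have hcc : (0:ℝ) ≤ 1 - c := by linarith
  have hM1 : (1:ℝ) ≤ (M:ℝ) := by exact_mod_cast hM
  have hup : wr M (j-1) + wr M (j+2*M-1) ≤ (M:ℝ) := by
    rcases lt_or_ge j 1 with h | h
    · rw [wr_eq_zero M (j-1) (by omega)]
      have := wr_le M (j+2*M-1) hM
      have := wr_nonneg M (j+2*M-1)
      linarith
    · rw [wr_eq_zero M (j+2*M-1) (by omega)]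
      have := wr_le M (j-1) hM
      have := wr_nonneg M (j-1)
      linarith
  have hlow : (0:ℝ) ≤ wr M (j+M-1) ∧ wr M (j+M-1) ≤ (M:ℝ) := ⟨wr_nonneg _ _, wr_le _ _ hM⟩
  have hCF0 := CF_zero_eq M c hM
  have hmul : 2*(1-c)*NF M j ≤ 2*(1-c)*NF M 0 := by nlinarith
  rw [abs_le]
  constructor
  · -- lower bound: CF j ≥ -2M ≥ -(3 CF0)
    have h1 : CF M c j ≥ -(2*(M:ℝ)) := by
      have := wr_nonneg M (j-1)
      have := wr_nonneg M (j+2*M-1)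
      have hm : 0 ≤ 2*(1-c)*NF M j := by positivity
      rw [hCFj]; linarith [hlow.2]
    have : 3 * CF M c 0 ≥ 2*(M:ℝ) := by rw [hCF0]; nlinarith
    linarith
  · -- upper bound
    have h1 : CF M c j ≤ (M:ℝ) + 2*(1-c)*NF M 0 := by
      rw [hCFj]; linarith [hlow.1]
    have : (M:ℝ) + 2*(1-c)*NF M 0 ≤ 3 * CF M c 0 := by rw [hCF0]; nlinarith
    linarith

private lemma CF_vanish (M : ℤ) (c : ℝ) (j : ℤ) (h : 2*M ≤ j ∨ j ≤ -(2*M)) :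
    CF M c j = 0 := by
  unfold CF
  rw [NF_eq_zero M (j-1) (by omega), NF_eq_zero M (j+1) (by omega), NF_eq_zero M j (by omega)]
  ring

private lemma NF_zero_out (M j : ℤ) (h : 2*M-2 < j ∨ j < -(2*M-2)) : NF M j = 0 :=
  NF_eq_zero M j h

private lemma identA (M : ℤ) (hM : 1 ≤ M) (θ : ℝ) :
    Wc M θ * (starRingEnd ℂ) (Wc M θ)
      = ∑ j ∈ Om M, ((NF M j : ℝ) : ℂ) * e ((j : ℝ) * θ) := by
  have hL : Wc M θ * (starRingEnd ℂ) (Wc M θ)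
      = ∑ s ∈ SS M, ∑ t ∈ SS M,
          ((wr M s : ℝ):ℂ) * ((wr M t : ℝ):ℂ) * e (((s-t : ℤ):ℝ)*θ) := by
    unfold Wc
    rw [map_sum, Finset.sum_mul]
    refine Finset.sum_congr rfl fun s _ => ?_
    rw [Finset.mul_sum]
    refine Finset.sum_congr rfl fun t _ => ?_
    rw [map_mul, Complex.conj_ofReal, e_conj]
    have harg : ((s-t : ℤ):ℝ)*θ = (s:ℝ)*θ + (-((t:ℝ)*θ)) := by push_cast; ring
    rw [harg, e_add]
    ring
  have hR : ∑ j ∈ Om M, ((NF M j : ℝ) : ℂ) * e ((j : ℝ) * θ)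
      = ∑ s ∈ SS M, ∑ t ∈ SS M,
          ((wr M s : ℝ):ℂ) * ((wr M t : ℝ):ℂ) * e (((s-t : ℤ):ℝ)*θ) := by
    have step1 : ∀ j ∈ Om M, ((NF M j : ℝ) : ℂ) * e ((j : ℝ) * θ)
        = ∑ s ∈ SS M, ((wr M s : ℝ):ℂ) * ((wr M (s-j) : ℝ):ℂ) * e ((j:ℝ) * θ) := by
      intro j _
      unfold NF
      push_cast
      rw [Finset.sum_mul]
    rw [Finset.sum_congr rfl step1, Finset.sum_comm]
    refine Finset.sum_congr rfl fun s hs => ?_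
    simp only [SS, Finset.mem_Icc] at hs
    have step2 : ∀ j ∈ Om M, ((wr M s : ℝ):ℂ) * ((wr M (s-j) : ℝ):ℂ) * e ((j:ℝ) * θ)
        = (fun t => ((wr M s : ℝ):ℂ) * ((wr M t : ℝ):ℂ) * e (((s-t:ℤ):ℝ) * θ)) (s - j) := by
      intro j _
      simp only []
      congr 3
      push_cast
      ring
    rw [Finset.sum_congr rfl step2,
      show Om M = Finset.Icc (-(3*M)) (3*M) from rfl,
      sum_sub_reindex (fun t => ((wr M s : ℝ):ℂ) * ((wr M t : ℝ):ℂ) * e (((s-t:ℤ):ℝ) * θ)) s]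
    exact sum_shrink _ (by omega) (by omega)
      (fun t ht => by
        show ((wr M s : ℝ):ℂ) * ((wr M t : ℝ):ℂ) * e (((s-t:ℤ):ℝ) * θ) = 0
        rw [wr_eq_zero M t ht]
        push_cast; ring)
  rw [hL, hR]

private lemma identB (M : ℤ) (hM : 1 ≤ M) (c : ℝ) (θ : ℝ) :
    (e θ + e (-θ) - 2*(c:ℂ)) * ∑ j ∈ Om M, ((NF M j : ℝ) : ℂ) * e ((j : ℝ) * θ)
      = ∑ j ∈ Om M, ((CF M c j : ℝ) : ℂ) * e ((j : ℝ) * θ) := by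
  rw [sub_mul, add_mul, Finset.mul_sum, Finset.mul_sum, Finset.mul_sum]
  have s1 : ∀ j ∈ Om M, e θ * (((NF M j : ℝ):ℂ) * e ((j:ℝ)*θ))
      = (fun u => ((NF M (u-1) : ℝ):ℂ) * e ((u:ℝ)*θ)) (j+1) := by
    intro j _
    simp only [add_sub_cancel_right]
    rw [← mul_assoc, mul_comm (e θ), mul_assoc, ← e_add]
    congr 2
    push_cast
    ring
  have s2 : ∀ j ∈ Om M, e (-θ) * (((NF M j : ℝ):ℂ) * e ((j:ℝ)*θ))
      = (fun u => ((NF M (u+1) : ℝ):ℂ) * e ((u:ℝ)*θ)) (j + (-1)) := by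
    intro j _
    show e (-θ) * (((NF M j : ℝ):ℂ) * e ((j:ℝ)*θ))
        = ((NF M (j + (-1) + 1) : ℝ):ℂ) * e (((j + (-1) : ℤ):ℝ)*θ)
    rw [show j + (-1) + 1 = j by ring]
    rw [← mul_assoc, mul_comm (e (-θ)), mul_assoc, ← e_add]
    congr 2
    push_cast
    ring
  rw [Finset.sum_congr rfl s1, Finset.sum_congr rfl s2]
  have t1 : ∑ j ∈ Om M, (fun u => ((NF M (u-1) : ℝ):ℂ) * e ((u:ℝ)*θ)) (j+1)
      = ∑ u ∈ Om M, ((NF M (u-1) : ℝ):ℂ) * e ((u:ℝ)*θ) := by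
    rw [show Om M = Finset.Icc (-(3*M)) (3*M) from rfl,
      sum_transl (fun u => ((NF M (u-1) : ℝ):ℂ) * e ((u:ℝ)*θ)) (-(3*M)) (3*M) 1]
    have hv : ∀ x : ℤ, (x < -(3*M)+1 ∨ 3*M < x) →
        ((NF M (x-1) : ℝ):ℂ) * e ((x:ℝ)*θ) = 0 := by
      intro x hx
      rw [NF_zero_out M (x-1) (by omega)]
      push_cast; ring
    have e1 : ∑ x ∈ Finset.Icc (-(3*M)) (3*M+1), ((NF M (x-1) : ℝ):ℂ) * e ((x:ℝ)*θ)
        = ∑ x ∈ Finset.Icc (-(3*M)+1) (3*M+1), ((NF M (x-1) : ℝ):ℂ) * e ((x:ℝ)*θ) :=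
      sum_shrink _ (by omega) (by omega) (fun x hx => hv x (by omega))
    have e2 : ∑ x ∈ Finset.Icc (-(3*M)) (3*M+1), ((NF M (x-1) : ℝ):ℂ) * e ((x:ℝ)*θ)
        = ∑ x ∈ Finset.Icc (-(3*M)) (3*M), ((NF M (x-1) : ℝ):ℂ) * e ((x:ℝ)*θ) :=
      sum_shrink _ (by omega) (by omega) (fun x hx => hv x (by omega))
    rw [← e1, e2]
  have t2 : ∑ j ∈ Om M, (fun u => ((NF M (u+1) : ℝ):ℂ) * e ((u:ℝ)*θ)) (j+(-1))
      = ∑ u ∈ Om M, ((NF M (u+1) : ℝ):ℂ) * e ((u:ℝ)*θ) := by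
    rw [show Om M = Finset.Icc (-(3*M)) (3*M) from rfl,
      sum_transl (fun u => ((NF M (u+1) : ℝ):ℂ) * e ((u:ℝ)*θ)) (-(3*M)) (3*M) (-1)]
    have hv : ∀ x : ℤ, (x < -(3*M) ∨ 3*M+(-1) < x) →
        ((NF M (x+1) : ℝ):ℂ) * e ((x:ℝ)*θ) = 0 := by
      intro x hx
      rw [NF_zero_out M (x+1) (by omega)]
      push_cast; ring
    have e1 : ∑ x ∈ Finset.Icc (-(3*M)+(-1)) (3*M), ((NF M (x+1) : ℝ):ℂ) * e ((x:ℝ)*θ)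
        = ∑ x ∈ Finset.Icc (-(3*M)+(-1)) (3*M+(-1)), ((NF M (x+1) : ℝ):ℂ) * e ((x:ℝ)*θ) :=
      sum_shrink _ (by omega) (by omega) (fun x hx => hv x (by omega))
    have e2 : ∑ x ∈ Finset.Icc (-(3*M)+(-1)) (3*M), ((NF M (x+1) : ℝ):ℂ) * e ((x:ℝ)*θ)
        = ∑ x ∈ Finset.Icc (-(3*M)) (3*M), ((NF M (x+1) : ℝ):ℂ) * e ((x:ℝ)*θ) :=
      sum_shrink _ (by omega) (by omega) (fun x hx => hv x (by omega))
    rw [← e1, e2]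
  rw [t1, t2]
  rw [← Finset.sum_add_distrib, ← Finset.sum_sub_distrib]
  apply Finset.sum_congr rfl
  intro j _
  have : (2:ℂ)*(c:ℂ) * (((NF M j : ℝ):ℂ) * e ((j:ℝ)*θ)) = ((2*c*NF M j : ℝ):ℂ) * e ((j:ℝ)*θ) := by
    push_cast; ring
  rw [this]
  unfold CF
  push_cast
  ring

private lemma cos_bound (H : ℕ) (hH2 : 2 ≤ H) (θ : ℝ)
    (hnint : 1/(H:ℝ) ≤ |θ - (round θ : ℝ)|) :
    Real.cos (2*Real.pi*θ) ≤ Real.cos (2*Real.pi/(H:ℝ)) := by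
  have hH0 : (2:ℝ) ≤ (H:ℝ) := by exact_mod_cast hH2
  have hγ2 : |θ - (round θ : ℝ)| ≤ 1/2 := abs_sub_round θ
  have harg : 2*Real.pi*θ = 2*Real.pi*(θ - (round θ:ℝ)) + (round θ : ℝ)*(2*Real.pi) := by ring
  rw [harg, Real.cos_add_int_mul_two_pi]
  set γ := θ - (round θ : ℝ) with hγ
  have hcabs : Real.cos (2*Real.pi*γ) = Real.cos (2*Real.pi*|γ|) := by
    rcases abs_cases γ with ⟨h,_⟩ | ⟨h,_⟩
    · rw [h]
    · rw [h, show 2*Real.pi*(-γ) = -(2*Real.pi*γ) by ring, Real.cos_neg]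
  rw [hcabs]
  apply Real.cos_le_cos_of_nonneg_of_le_pi
  · positivity
  · nlinarith [Real.pi_pos]
  · have h1 : 2*Real.pi/(H:ℝ) = 2*Real.pi*(1/(H:ℝ)) := by ring
    rw [h1]
    have := mul_le_mul_of_nonneg_left hnint (by positivity : (0:ℝ) ≤ 2*Real.pi)
    linarith

private lemma key_numeric (H : ℕ) (hH2 : 2 ≤ H) (M : ℤ) (hM : 1 ≤ M)
    (hHM : (H:ℤ) ≤ 2*M) :
    (7/4)*(M:ℝ) ≤ (1 - Real.cos (2*Real.pi/(H:ℝ))) * NF M 0 := by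
  rw [NF_zero_eq M hM]
  have h1c : 1 - Real.cos (2*Real.pi/(H:ℝ)) = 2*Real.sin (Real.pi/(H:ℝ))^2 := by
    rw [show 2*Real.pi/(H:ℝ) = 2*(Real.pi/(H:ℝ)) by ring, Real.cos_two_mul]
    nlinarith [Real.sin_sq_add_cos_sq (Real.pi/(H:ℝ))]
  rw [h1c]
  have hMr : (1:ℝ) ≤ (M:ℝ) := by exact_mod_cast hM
  have main : (21/8 : ℝ) ≤ Real.sin (Real.pi/(H:ℝ))^2 * (2*(M:ℝ)^2+1) := by
    rcases Nat.lt_or_ge H 4 with h4 | h4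
    · interval_cases H
      · -- H = 2
        norm_num [Real.sin_pi_div_two]
        nlinarith [hMr]
      · -- H = 3
        have hM2 : (2:ℝ) ≤ (M:ℝ) := by
          have h2 : (2:ℤ) ≤ M := by omega
          exact_mod_cast h2
        norm_num [Real.sin_pi_div_three]
        have h3 : Real.sqrt 3^2 = 3 := Real.sq_sqrt (by norm_num)
        nlinarith [h3, hM2, Real.sqrt_nonneg 3]
    · -- H ≥ 4
      have hy4 : (4:ℝ) ≤ (H:ℝ) := by exact_mod_cast h4
      have hy0 : (0:ℝ) < (H:ℝ) := by linarith
      have hx0 : 0 < Real.pi/(H:ℝ) := div_pos Real.pi_pos hy0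
      have hx4 : Real.pi/(H:ℝ) ≤ Real.pi/4 :=
        div_le_div_of_nonneg_left Real.pi_pos.le (by norm_num) hy4
      have hpi1 : Real.pi < 3.15 := Real.pi_lt_d2
      have hpi2 : 3.141592 < Real.pi := Real.pi_gt_d6
      have hx1 : Real.pi/(H:ℝ) ≤ 1 := by
        have : Real.pi/4 ≤ 1 := by linarith
        linarith
      have hxy : (Real.pi/(H:ℝ))*(H:ℝ) = Real.pi := div_mul_cancel₀ _ (ne_of_gt hy0)
      have hsin : Real.pi/(H:ℝ) - (Real.pi/(H:ℝ))^3/4 < Real.sin (Real.pi/(H:ℝ)) := by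
        have := Real.sin_gt_sub_cube hx0
        linarith [pow_pos hx0 3]
      have hx2 : (Real.pi/(H:ℝ))^2 ≤ Real.pi^2/16 := by nlinarith [hx0.le, hx4]
      have hsy : (53/20:ℝ) ≤ Real.sin (Real.pi/(H:ℝ)) * (H:ℝ) := by
        have hmul : (Real.pi/(H:ℝ) - (Real.pi/(H:ℝ))^3/4)*(H:ℝ)
            < Real.sin (Real.pi/(H:ℝ)) * (H:ℝ) :=
          mul_lt_mul_of_pos_right hsin hy0
        have hid : (Real.pi/(H:ℝ) - (Real.pi/(H:ℝ))^3/4)*(H:ℝ)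
            = Real.pi - (Real.pi/(H:ℝ))^2*Real.pi/4 := by
          field_simp
        rw [hid] at hmul
        have hcube : (Real.pi/(H:ℝ))^2*Real.pi ≤ Real.pi^3/16 := by
          have := mul_le_mul_of_nonneg_right hx2 Real.pi_pos.le
          calc (Real.pi/(H:ℝ))^2*Real.pi ≤ (Real.pi^2/16)*Real.pi := this
            _ = Real.pi^3/16 := by ring
        have hp3 : Real.pi^3 < 31.26 := by nlinarith
        linarith
      have hsnn : 0 ≤ Real.sin (Real.pi/(H:ℝ)) :=
        Real.sin_nonneg_of_nonneg_of_le_pi hx0.le (by linarith)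
      have hM2 : (H:ℝ) ≤ 2*(M:ℝ) := by
        have hc : ((H:ℤ):ℝ) ≤ ((2*M : ℤ):ℝ) := by exact_mod_cast hHM
        push_cast at hc
        linarith
      have h1 : (53/20:ℝ)*(53/20) ≤ (Real.sin (Real.pi/(H:ℝ)) * (H:ℝ))*(Real.sin (Real.pi/(H:ℝ)) * (H:ℝ)) :=
        mul_le_mul hsy hsy (by norm_num) (by linarith)
      have h2 : (Real.sin (Real.pi/(H:ℝ)) * (H:ℝ))*(Real.sin (Real.pi/(H:ℝ)) * (H:ℝ))
          = Real.sin (Real.pi/(H:ℝ))^2 * (H:ℝ)^2 := by ring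
      have h3 : (H:ℝ)^2 ≤ 4*(M:ℝ)^2 := by nlinarith [hy4]
      have h4' : Real.sin (Real.pi/(H:ℝ))^2 * (H:ℝ)^2 ≤ Real.sin (Real.pi/(H:ℝ))^2 * (4*(M:ℝ)^2) :=
        mul_le_mul_of_nonneg_left h3 (sq_nonneg _)
      rw [h2] at h1
      linarith [h1, h4', sq_nonneg (Real.sin (Real.pi/(H:ℝ)))]
  have hfactor : (0:ℝ) ≤ 2*(M:ℝ)/3 := by linarith
  nlinarith [mul_le_mul_of_nonneg_left main hfactor]

theorem small_fractional_part_from_exponential_sums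
    (A : Finset ℕ) (hA : ∀ n ∈ A, 0 < n) (g : ℕ → ℝ) (hg : ∀ n ∈ A, 0 ≤ g n)
    (H : ℕ) (hH : 0 < H) (α : ℕ → ℝ)
    (hsum : ∑ h ∈ Finset.Icc 1 H, ‖∑ n ∈ A, (g n : ℂ) * e ((h : ℝ) * α n)‖ <
      (1 / 6) * ∑ n ∈ A, g n) :
    ∃ n ∈ A, nint (α n) < 1 / (H : ℝ) := by
  classical
  by_contra hcon
  push_neg at hcon
  -- basic positivity
  have hSnn : (0:ℝ) ≤ ∑ h ∈ Finset.Icc 1 H, ‖∑ n ∈ A, (g n : ℂ) * e ((h : ℝ) * α n)‖ :=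
    Finset.sum_nonneg (fun _ _ => norm_nonneg _)
  have hGpos : (0:ℝ) < ∑ n ∈ A, g n := by nlinarith [hsum, hSnn]
  have hAne : A.Nonempty := Finset.nonempty_of_sum_ne_zero (ne_of_gt hGpos)
  rcases Nat.lt_or_ge H 2 with hH1 | hH2
  · -- H = 1 : trivial since nint ≤ 1/2 < 1
    have hHe : H = 1 := by omega
    subst hHe
    obtain ⟨n, hn⟩ := hAne
    have h1 := hcon n hn
    have h2 : nint (α n) ≤ 1/2 := abs_sub_round (α n)
    norm_num at h1
    linarith
  -- main case H ≥ 2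
  set m : ℕ := (H+1)/2 with hm
  set M : ℤ := (m : ℤ) with hMdef
  have hM1 : 1 ≤ M := by
    rw [hMdef]
    exact_mod_cast (by omega : 1 ≤ m)
  have h2M : 2*M - 1 ≤ (H:ℤ) := by
    rw [hMdef]
    have h' : (2*m : ℤ) ≤ (H:ℤ) + 1 := by exact_mod_cast (by omega : 2*m ≤ H + 1)
    omega
  have hH2M : (H:ℤ) ≤ 2*M := by
    rw [hMdef]
    exact_mod_cast (by omega : H ≤ 2*m)
  set c : ℝ := Real.cos (2*Real.pi/(H:ℝ)) with hc
  have hc1 : c ≤ 1 := Real.cos_le_one _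
  have hkey : (7/4)*(M:ℝ) ≤ (1-c)*NF M 0 := key_numeric H hH2 M hM1 hH2M
  have hCF0 : CF M c 0 = 2*(1-c)*NF M 0 - 2*(M:ℝ) := CF_zero_eq M c hM1
  have hMr : (1:ℝ) ≤ (M:ℝ) := by exact_mod_cast hM1
  have hCF0pos : 0 < CF M c 0 := by rw [hCF0]; nlinarith [hkey, hMr]
  -- the twisted sums
  set T : ℤ → ℂ := fun j => ∑ n ∈ A, (g n:ℂ) * e ((j:ℝ) * α n) with hT
  -- cosine bound at each point
  have hcos : ∀ n ∈ A, Real.cos (2*Real.pi*(α n)) ≤ c := by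
    intro n hn
    have h1 := hcon n hn
    unfold nint at h1
    exact cos_bound H hH2 (α n) h1
  -- identity: the sum over j equals sum over n of nonpositive terms
  have hPhi : (∑ j ∈ Om M, ((CF M c j : ℝ):ℂ) * T j)
      = ∑ n ∈ A, (g n : ℂ) *
          ((e (α n) + e (-(α n)) - 2*(c:ℂ)) * (Wc M (α n) * (starRingEnd ℂ) (Wc M (α n)))) := by
    have h1 : ∀ j ∈ Om M, ((CF M c j : ℝ):ℂ) * T j
        = ∑ n ∈ A, ((CF M c j : ℝ):ℂ) * ((g n:ℂ) * e ((j:ℝ) * α n)) := by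
      intro j _
      rw [hT]
      exact Finset.mul_sum _ _ _
    rw [Finset.sum_congr rfl h1, Finset.sum_comm]
    refine Finset.sum_congr rfl fun n _ => ?_
    rw [identA M hM1 (α n), identB M hM1 c (α n), Finset.mul_sum]
    exact Finset.sum_congr rfl fun j _ => by ring
  -- real part of RHS is nonpositive
  have hRHSle : (∑ n ∈ A, (g n : ℂ) *
      ((e (α n) + e (-(α n)) - 2*(c:ℂ)) * (Wc M (α n) * (starRingEnd ℂ) (Wc M (α n))))).re ≤ 0 := by
    rw [Complex.re_sum]
    apply Finset.sum_nonpos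
    intro n hn
    have h1 : e (-(α n)) = (starRingEnd ℂ) (e (α n)) := (e_conj (α n)).symm
    rw [h1, Complex.add_conj, Complex.mul_conj, e_re]
    have h2 : ((2*Real.cos (2*Real.pi*(α n)) : ℝ):ℂ) - 2*(c:ℂ)
        = ((2*Real.cos (2*Real.pi*(α n)) - 2*c : ℝ):ℂ) := by push_cast; ring
    rw [h2, ← Complex.ofReal_mul, ← Complex.ofReal_mul, Complex.ofReal_re]
    have hge := hg n hn
    have hcosle := hcos n hn
    have hnsq : 0 ≤ Complex.normSq (Wc M (α n)) := Complex.normSq_nonneg _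
    apply mul_nonpos_of_nonneg_of_nonpos hge
    apply mul_nonpos_of_nonpos_of_nonneg (by linarith) hnsq
  -- real part of LHS: split off j = 0
  have hre : (∑ j ∈ Om M, ((CF M c j : ℝ):ℂ) * T j).re
      = ∑ j ∈ Om M, CF M c j * (T j).re := by
    rw [Complex.re_sum]
    exact Finset.sum_congr rfl fun j _ => by simp [Complex.mul_re]
  have hT0 : (T 0).re = ∑ n ∈ A, g n := by
    rw [hT]
    simp only [Int.cast_zero, zero_mul, e_zero, mul_one]
    rw [show (∑ n ∈ A, (g n:ℂ)) = ((∑ n ∈ A, g n : ℝ):ℂ) by push_cast; rfl]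
    exact Complex.ofReal_re _
  have h0mem : (0:ℤ) ∈ Om M := by
    simp only [Om, Finset.mem_Icc]
    omega
  have hsplit : ∑ j ∈ Om M, CF M c j * (T j).re
      = CF M c 0 * (T 0).re + ∑ j ∈ (Om M).erase 0, CF M c j * (T j).re :=
    (Finset.add_sum_erase _ _ h0mem).symm
  -- restrict the erased sum to the support of CF
  have herase : ∑ j ∈ (Om M).erase 0, CF M c j * (T j).re
      = ∑ j ∈ (Finset.Icc (-(2*M-1)) (2*M-1)).erase 0, CF M c j * (T j).re := by
    refine (Finset.sum_subset ?_ ?_).symm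
    · intro x hx
      simp only [Finset.mem_erase, Finset.mem_Icc, Om] at hx ⊢
      omega
    · intro x hx hx'
      simp only [Finset.mem_erase, Finset.mem_Icc, Om] at hx hx'
      rw [CF_vanish M c x (by omega)]
      ring
  -- lower bound each remaining term
  have hlow : ∀ j ∈ (Finset.Icc (-(2*M-1)) (2*M-1)).erase 0,
      -(3*CF M c 0 * ‖T j‖) ≤ CF M c j * (T j).re := by
    intro j hj
    simp only [Finset.mem_erase, Finset.mem_Icc] at hj
    have hb := CF_bound M c hM1 hc1 hkey j (by omega) (by omega) hj.1
    have hre2 : |(T j).re| ≤ ‖T j‖ := Complex.abs_re_le_norm (T j)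
    have h1 : -(CF M c j * (T j).re) ≤ |CF M c j| * |(T j).re| := by
      rw [← abs_mul]
      exact neg_le_abs _
    have h2 : |CF M c j| * |(T j).re| ≤ (3*CF M c 0) * ‖T j‖ :=
      mul_le_mul hb hre2 (abs_nonneg _) (by positivity)
    linarith
  have hsum_low : -(3*CF M c 0 * ∑ j ∈ (Finset.Icc (-(2*M-1)) (2*M-1)).erase 0, ‖T j‖)
      ≤ ∑ j ∈ (Finset.Icc (-(2*M-1)) (2*M-1)).erase 0, CF M c j * (T j).re := by
    have := Finset.sum_le_sum hlow
    calc -(3*CF M c 0 * ∑ j ∈ (Finset.Icc (-(2*M-1)) (2*M-1)).erase 0, ‖T j‖)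
        = ∑ j ∈ (Finset.Icc (-(2*M-1)) (2*M-1)).erase 0, -(3*CF M c 0 * ‖T j‖) := by
          rw [Finset.mul_sum, ← Finset.sum_neg_distrib]
      _ ≤ _ := this
  -- norm symmetry
  have hTnorm : ∀ j : ℤ, ‖T (-j)‖ = ‖T j‖ := by
    intro j
    have hconj : T (-j) = (starRingEnd ℂ) (T j) := by
      rw [hT]
      simp only []
      rw [map_sum]
      refine Finset.sum_congr rfl fun n _ => ?_
      rw [map_mul, Complex.conj_ofReal, e_conj]
      congr 1
      push_cast
      ring
    rw [hconj]
    exact RCLike.norm_conj _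
  -- bound the sum of norms by twice the hypothesis sum
  have hPPle : ∑ j ∈ (Finset.Icc (-(2*M-1)) (2*M-1)).erase 0, ‖T j‖
      ≤ 2 * ∑ h ∈ Finset.Icc 1 H, ‖∑ n ∈ A, (g n : ℂ) * e ((h : ℝ) * α n)‖ := by
    have hsplitPP : (Finset.Icc (-(2*M-1)) (2*M-1)).erase 0
        = Finset.Icc (-(2*M-1)) (-1) ∪ Finset.Icc 1 (2*M-1) := by
      ext x
      simp only [Finset.mem_erase, Finset.mem_Icc, Finset.mem_union]
      omega
    have hdisj : Disjoint (Finset.Icc (-(2*M-1)) (-1)) (Finset.Icc (1:ℤ) (2*M-1)) := by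
      rw [Finset.disjoint_left]
      intro a ha hb
      simp only [Finset.mem_Icc] at ha hb
      omega
    rw [hsplitPP, Finset.sum_union hdisj]
    have hnegpart : ∑ j ∈ Finset.Icc (-(2*M-1)) (-1), ‖T j‖
        = ∑ j ∈ Finset.Icc (1:ℤ) (2*M-1), ‖T j‖ := by
      have hrr := sum_sub_reindex (fun u => ‖T u‖) 0 1 (2*M-1)
      rw [show (0:ℤ) - (2*M-1) = -(2*M-1) by ring, show (0:ℤ) - 1 = -1 by ring] at hrr
      rw [← hrr]
      refine Finset.sum_congr rfl fun j _ => ?_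
      rw [show (0:ℤ) - j = -j by ring]
      exact hTnorm j
    rw [hnegpart]
    have hZle : ∑ j ∈ Finset.Icc (1:ℤ) (2*M-1), ‖T j‖
        ≤ ∑ j ∈ Finset.Icc (1:ℤ) (H:ℤ), ‖T j‖ :=
      Finset.sum_le_sum_of_subset_of_nonneg
        (Finset.Icc_subset_Icc (le_refl _) h2M) (fun _ _ _ => norm_nonneg _)
    have hZN : ∑ j ∈ Finset.Icc (1:ℤ) (H:ℤ), ‖T j‖
        = ∑ h ∈ Finset.Icc 1 H, ‖∑ n ∈ A, (g n : ℂ) * e ((h : ℝ) * α n)‖ := by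
      refine Finset.sum_nbij' (fun j => j.toNat) (fun h => (h:ℤ)) ?_ ?_ ?_ ?_ ?_
      · intro j hj
        simp only [Finset.mem_Icc] at hj ⊢
        omega
      · intro h hh
        simp only [Finset.mem_Icc] at hh ⊢
        omega
      · intro j hj
        simp only [Finset.mem_Icc] at hj
        omega
      · intro h _
        omega
      · intro j hj
        simp only [Finset.mem_Icc] at hj
        rw [hT]
        simp only []
        congr 1
        refine Finset.sum_congr rfl fun n _ => ?_
        congr 2
        rw [show ((j.toNat : ℕ):ℝ) = ((j.toNat : ℤ):ℝ) by push_cast; ring,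
          Int.toNat_of_nonneg (by omega)]
    linarith [hZle, hZN.le, hZN.ge]
  -- put everything together
  have hfinal : (0:ℝ) < CF M c 0 * (T 0).re
      + ∑ j ∈ (Finset.Icc (-(2*M-1)) (2*M-1)).erase 0, CF M c j * (T j).re := by
    have hb1 : ∑ h ∈ Finset.Icc 1 H, ‖∑ n ∈ A, (g n : ℂ) * e ((h : ℝ) * α n)‖
        < (1/6) * ∑ n ∈ A, g n := hsum
    have := hsum_low
    rw [hT0]
    nlinarith [hPPle, hCF0pos, hb1, hsum_low]
  have hPhire := congrArg Complex.re hPhi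
  rw [hre, hsplit, herase] at hPhire
  rw [hPhire] at hfinal
  linarith [hRHSle, hfinal]
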